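/- Let u be a harmonic function on a domain Ω ⊂ ℂ. Away from the critical points of u, the level lines of u are the traces of trajectories of the Newtonian system d²z/dt² = −2∂V/∂z̄ with unit mass and potential energy V = −(1/2)|∇u|²; indeed, every solution of the first-order Hamiltonian equation dz/dt = −2i ∂u/∂z̄ (whose trajectories are level lines of u) solves this Newtonian equation. -/

import Mathlib

open Complex Filter Set MeasureTheory

noncomputable section

/-- The Laplacian of a real-valued function on `ℂ` (viewed as `ℝ²`). -/
def lap2 (f : ℂ → ℝ) (z : ℂ) : ℝ :=
  fderiv ℝ (fun w => fderiv ℝ f w 1) z 1 +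
    fderiv ℝ (fun w => fderiv ℝ f w Complex.I) z Complex.I

/-- `f` is harmonic on the set `s`. -/
def HarmOn (f : ℂ → ℝ) (s : Set ℂ) : Prop :=
  ContDiffOn ℝ 2 f s ∧ ∀ z ∈ s, lap2 f z = 0

/-- Wirtinger derivative `∂f/∂z` of a real-valued function. -/
def wdz (f : ℂ → ℝ) (z : ℂ) : ℂ :=
  (((fderiv ℝ f z 1 : ℝ) : ℂ) - Complex.I * ((fderiv ℝ f z Complex.I : ℝ) : ℂ)) / 2

/-- Wirtinger derivative `∂f/∂z̄` of a real-valued function. -/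
def wdzbar (f : ℂ → ℝ) (z : ℂ) : ℂ :=
  (((fderiv ℝ f z 1 : ℝ) : ℂ) + Complex.I * ((fderiv ℝ f z Complex.I : ℝ) : ℂ)) / 2

/-- Wirtinger derivative `∂f/∂z` of a complex-valued function. -/
def wdzC (f : ℂ → ℂ) (z : ℂ) : ℂ :=
  (fderiv ℝ f z 1 - Complex.I * fderiv ℝ f z Complex.I) / 2

/-- Wirtinger derivative `∂f/∂z̄` of a complex-valued function. -/
def wdzbarC (f : ℂ → ℂ) (z : ℂ) : ℂ :=
  (fderiv ℝ f z 1 + Complex.I * fderiv ℝ f z Complex.I) / 2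

/-- The mixed derivative `∂²G/∂z∂ζ` of a two-variable function `G`. -/
def d2G (G : ℂ → ℂ → ℝ) (z ζ : ℂ) : ℂ := wdzC (fun w => wdz (fun x => G x w) z) ζ

/-- The mixed derivative `∂²G/∂z∂ζ̄` of a two-variable function `G`. -/
def d2Gbar (G : ℂ → ℂ → ℝ) (z ζ : ℂ) : ℂ := wdzbarC (fun w => wdz (fun x => G x w) z) ζ

/-- The Bergman kernel `K(z,ζ) = -(2/π)·∂²G/∂z∂ζ̄` of the Green's function `G`. -/
def KB (G : ℂ → ℂ → ℝ) (z ζ : ℂ) : ℂ := -((2 / Real.pi : ℝ) : ℂ) * d2Gbar G z ζ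

/-- The Schiffer kernel `L(z,ζ) = -(2/π)·∂²G/∂z∂ζ` of the Green's function `G`. -/
def LB (G : ℂ → ℂ → ℝ) (z ζ : ℂ) : ℂ := -((2 / Real.pi : ℝ) : ℂ) * d2G G z ζ

/-- `G` is the (Dirichlet) Green's function of the domain `Ω`:
it is symmetric and positive, `G(·,ζ) = -log|z-ζ| + harmonic` in `Ω`,
and `G(·,ζ)` tends to `0` at every boundary point. -/
structure IsGreenFn (Ω : Set ℂ) (G : ℂ → ℂ → ℝ) : Prop where
  symm : ∀ z ∈ Ω, ∀ ζ ∈ Ω, G z ζ = G ζ z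
  pos : ∀ ζ ∈ Ω, ∀ z ∈ Ω, z ≠ ζ → 0 < G z ζ
  harm : ∀ ζ ∈ Ω, ∃ h : ℂ → ℝ, HarmOn h Ω ∧
    ∀ z ∈ Ω, z ≠ ζ → G z ζ = -Real.log ‖z - ζ‖ + h z
  bdry : ∀ ζ ∈ Ω, ∀ w ∈ frontier Ω, Filter.Tendsto (fun z => G z ζ) (nhdsWithin w Ω) (nhds 0)

/-- The euclidean norm of the gradient of a real-valued function on `ℂ`. -/
def nGrad (f : ℂ → ℝ) (z : ℂ) : ℝ :=
  Real.sqrt ((fderiv ℝ f z 1) ^ 2 + (fderiv ℝ f z Complex.I) ^ 2)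

/-- The gradient of a real-valued function on `ℂ`, as a complex number. -/
def gradC (f : ℂ → ℝ) (z : ℂ) : ℂ :=
  ((fderiv ℝ f z 1 : ℝ) : ℂ) + Complex.I * ((fderiv ℝ f z Complex.I : ℝ) : ℂ)

/-- The signed euclidean curvature of a parametrized plane curve. -/
def curvK (γ : ℝ → ℂ) (t : ℝ) : ℝ :=
  ((starRingEnd ℂ) (deriv γ t) * deriv (deriv γ) t).im / ‖deriv γ t‖ ^ 3

/-- The potential energy `V = -(1/2)|∇u|²`. -/
def potV (u : ℂ → ℝ) (z : ℂ) : ℝ :=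
  -(1 / 2) * ((fderiv ℝ u z 1) ^ 2 + (fderiv ℝ u z Complex.I) ^ 2)

/-- The density of the Poincaré metric (of curvature `-4`) obtained by pulling back
`|dζ|/(1-|ζ|²)` under a conformal map `φ` onto the unit disk. -/
def poincareDen (φ : ℂ → ℂ) (z : ℂ) : ℝ := ‖deriv φ z‖ / (1 - ‖φ z‖ ^ 2)

/-- The period of the differential on the Schottky double represented by the pair
`(f₁, f₂)` along the closed cycle obtained from the path `γ` (run through `Ω`)
together with its mirror path on the back side of the double. -/
def pairPeriod (f₁ f₂ : ℂ → ℂ) (γ : ℝ → ℂ) : ℂ :=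
  (∫ t in (0:ℝ)..1, f₁ (γ t) * deriv γ t) -
    (starRingEnd ℂ) (∫ t in (0:ℝ)..1, f₂ (γ t) * deriv γ t)

/-- The annulus `A_{1,R} = {z : 1 < |z| < R}`. -/
def ann (R : ℝ) : Set ℂ := {z : ℂ | 1 < ‖z‖ ∧ ‖z‖ < R}

/-- The lattice point `2m₁ω₁ + 2m₂ω₂` for the half-periods `ω₁ = log R`, `ω₂ = iπ`. -/
def latC (R : ℝ) (p : ℤ × ℤ) : ℂ :=
  2 * (p.1 : ℂ) * ((Real.log R : ℝ) : ℂ) + 2 * (p.2 : ℂ) * (((Real.pi : ℝ) : ℂ) * Complex.I)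

/-- The Weierstrass `℘`-function for the lattice with half-periods `log R` and `iπ`. -/
def weierP (R : ℝ) (z : ℂ) : ℂ :=
  1 / z ^ 2 + ∑' p : {p : ℤ × ℤ // p ≠ 0}, (1 / (z - latC R p.val) ^ 2 - 1 / latC R p.val ^ 2)

/-- The Weierstrass `ζ`-function for the lattice with half-periods `log R` and `iπ`. -/
def weierZ (R : ℝ) (z : ℂ) : ℂ :=
  1 / z + ∑' p : {p : ℤ × ℤ // p ≠ 0},
    (1 / (z - latC R p.val) + 1 / latC R p.val + z / latC R p.val ^ 2)

/-- The constant `η₁ = ζ(ω₁)` for the half-period `ω₁ = log R`. -/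
def eta1 (R : ℝ) : ℂ := weierZ R ((Real.log R : ℝ) : ℂ)

/-- `H` is the analytic completion (in the first variable) of the regular part of the
Green's function `G` of `Ω`, normalized by `Im H(ζ,ζ) = 0`. -/
structure IsACompl (Ω : Set ℂ) (G : ℂ → ℂ → ℝ) (H : ℂ → ℂ → ℂ) : Prop where
  holo : ∀ ζ ∈ Ω, DifferentiableOn ℂ (fun z => H z ζ) Ω
  re : ∀ ζ ∈ Ω, ∀ z ∈ Ω, z ≠ ζ → (H z ζ).re = G z ζ + Real.log ‖z - ζ‖
  norm : ∀ ζ ∈ Ω, (H ζ ζ).im = 0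

end

section AuxLemmas

open Complex Set

private lemma clmR_decomp (L : ℂ →L[ℝ] ℝ) (c : ℂ) :
    L c = c.re * L 1 + c.im * L Complex.I := by
  have h : c = c.re • (1 : ℂ) + c.im • Complex.I := by
    rw [Complex.real_smul, Complex.real_smul, mul_one]
    exact (Complex.re_add_im c).symm
  conv_lhs => rw [h]
  rw [map_add, _root_.map_smul, _root_.map_smul, smul_eq_mul, smul_eq_mul]

private lemma harm_key {Ω : Set ℂ} {u : ℂ → ℝ} (hopen : IsOpen Ω) (hu : HarmOn u Ω)
    {w : ℂ} (hw : w ∈ Ω) :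
    DifferentiableAt ℝ u w ∧
    ∃ DP DQ : ℂ →L[ℝ] ℝ,
      HasFDerivAt (fun x => fderiv ℝ u x 1) DP w ∧
      HasFDerivAt (fun x => fderiv ℝ u x Complex.I) DQ w ∧
      DP 1 + DQ Complex.I = 0 := by
  have hca : ContDiffAt ℝ 2 u w := hu.1.contDiffAt (hopen.mem_nhds hw)
  have hfd : ContDiffAt ℝ 1 (fderiv ℝ u) w := hca.fderiv_right (by norm_num)
  have hdf : DifferentiableAt ℝ (fderiv ℝ u) w := hfd.differentiableAt one_ne_zero
  have hPd : DifferentiableAt ℝ (fun x => fderiv ℝ u x 1) w :=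
    hdf.clm_apply (differentiableAt_const _)
  have hQd : DifferentiableAt ℝ (fun x => fderiv ℝ u x Complex.I) w :=
    hdf.clm_apply (differentiableAt_const _)
  exact ⟨hca.differentiableAt two_ne_zero,
    fderiv ℝ (fun x => fderiv ℝ u x 1) w, fderiv ℝ (fun x => fderiv ℝ u x Complex.I) w,
    hPd.hasFDerivAt, hQd.hasFDerivAt, hu.2 w hw⟩

private lemma vel_eq (u : ℂ → ℝ) (w : ℂ) :
    -2 * Complex.I * wdzbar u w
      = ((fderiv ℝ u w Complex.I : ℝ) : ℂ) - Complex.I * ((fderiv ℝ u w 1 : ℝ) : ℂ) := by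
  rw [wdzbar]
  linear_combination (-((fderiv ℝ u w Complex.I : ℝ) : ℂ)) * Complex.I_sq

private lemma step_newton {Ω : Set ℂ} {u : ℂ → ℝ} (hopen : IsOpen Ω) (hu : HarmOn u Ω)
    {z : ℝ → ℂ} {t : ℝ} (hmem : z t ∈ Ω)
    (hz : HasDerivAt z (-2 * Complex.I * wdzbar u (z t)) t) :
    HasDerivAt (fun s => u (z s)) 0 t ∧
      HasDerivAt (fun s => -2 * Complex.I * wdzbar u (z s)) (-2 * wdzbar (potV u) (z t)) t := by
  obtain ⟨hdu, DP, DQ, hP, hQ, hlap⟩ := harm_key hopen hu hmem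
  set w := z t with hw
  set c : ℂ := -2 * Complex.I * wdzbar u w with hcdef
  have hcval : c = ((fderiv ℝ u w Complex.I : ℝ) : ℂ) - Complex.I * ((fderiv ℝ u w 1 : ℝ) : ℂ) :=
    vel_eq u w
  have hcre : c.re = fderiv ℝ u w Complex.I := by rw [hcval]; simp
  have hcim : c.im = -(fderiv ℝ u w 1) := by rw [hcval]; simp
  -- first part : u is constant along the flow
  have h1 : HasDerivAt (fun s => u (z s)) (fderiv ℝ u w c) t :=
    hdu.hasFDerivAt.comp_hasDerivAt t hz
  have hzero : fderiv ℝ u w c = 0 := by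
    rw [clmR_decomp, hcre, hcim]; ring
  refine ⟨hzero ▸ h1, ?_⟩
  -- second part : the Newton equation
  have hPz : HasDerivAt (fun s => fderiv ℝ u (z s) 1) (DP c) t := hP.comp_hasDerivAt t hz
  have hQz : HasDerivAt (fun s => fderiv ℝ u (z s) Complex.I) (DQ c) t := hQ.comp_hasDerivAt t hz
  have hvel : HasDerivAt (fun s => -2 * Complex.I * wdzbar u (z s))
      (-2 * Complex.I * ((((DP c : ℝ) : ℂ) + Complex.I * ((DQ c : ℝ) : ℂ)) / 2)) t := by
    exact ((hPz.ofReal_comp.add (hQz.ofReal_comp.const_mul Complex.I)).div_const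
      2).const_mul (-2 * Complex.I)
  -- the derivative of the potential
  have hVfun : potV u = fun x => -(1/2) *
      (fderiv ℝ u x 1 * fderiv ℝ u x 1 + fderiv ℝ u x Complex.I * fderiv ℝ u x Complex.I) := by
    funext x; simp only [potV]; ring
  have hVfd : HasFDerivAt (potV u)
      ((-(1/2) : ℝ) • ((fderiv ℝ u w 1 • DP + fderiv ℝ u w 1 • DP) +
        (fderiv ℝ u w Complex.I • DQ + fderiv ℝ u w Complex.I • DQ))) w := by
    rw [hVfun]
    exact ((hP.mul hP).add (hQ.mul hQ)).const_mul (-(1/2) : ℝ)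
  have hV1 : fderiv ℝ (potV u) w 1
      = -(fderiv ℝ u w 1 * DP 1 + fderiv ℝ u w Complex.I * DQ 1) := by
    rw [hVfd.fderiv]
    simp [ContinuousLinearMap.add_apply, ContinuousLinearMap.smul_apply, smul_eq_mul]
    ring
  have hVI : fderiv ℝ (potV u) w Complex.I
      = -(fderiv ℝ u w 1 * DP Complex.I + fderiv ℝ u w Complex.I * DQ Complex.I) := by
    rw [hVfd.fderiv]
    simp [ContinuousLinearMap.add_apply, ContinuousLinearMap.smul_apply, smul_eq_mul]
    ring
  have hfinal : -2 * Complex.I * ((((DP c : ℝ) : ℂ) + Complex.I * ((DQ c : ℝ) : ℂ)) / 2)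
      = -2 * wdzbar (potV u) w := by
    have hDQI : DQ Complex.I = -(DP 1) := by linarith [hlap]
    rw [wdzbar, hV1, hVI, clmR_decomp DP c, clmR_decomp DQ c, hcre, hcim, hDQI]
    push_cast
    linear_combination (-(((fderiv ℝ u w Complex.I : ℝ) : ℂ) * ((DQ 1 : ℝ) : ℂ)
      + ((fderiv ℝ u w 1 : ℝ) : ℂ) * ((DP 1 : ℝ) : ℂ))) * Complex.I_sq
  exact hfinal ▸ hvel

end AuxLemmas

/-- Let `u` be harmonic on `Ω ⊆ ℂ`. Every solution of the Hamiltonian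
equation `dz/dt = -2i·∂u/∂z̄` stays on a level line of `u` and solves the Newtonian
equation `d²z/dt² = -2·∂V/∂z̄` with potential `V = -(1/2)|∇u|²`; moreover through every
point of `Ω` there is locally such a trajectory, so that away from critical points the
level lines of `u` are traces of trajectories of this Newtonian system. -/
theorem level_lines_newtonian
    (Ω : Set ℂ) (u : ℂ → ℝ)
    (hopen : IsOpen Ω) (hu : HarmOn u Ω) :
    (∀ z : ℝ → ℂ, (∀ t, z t ∈ Ω) →
      (∀ t, HasDerivAt z (-2 * Complex.I * wdzbar u (z t)) t) →
      (∀ t, u (z t) = u (z 0)) ∧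
        ∀ t, HasDerivAt (deriv z) (-2 * wdzbar (potV u) (z t)) t) ∧
    (∀ z₀ ∈ Ω, ∃ ε > (0:ℝ), ∃ z : ℝ → ℂ, z 0 = z₀ ∧
      ∀ t ∈ Set.Ioo (-ε) ε, z t ∈ Ω ∧
        HasDerivAt z (-2 * Complex.I * wdzbar u (z t)) t ∧
        u (z t) = u z₀ ∧
        HasDerivAt (deriv z) (-2 * wdzbar (potV u) (z t)) t) := by
  constructor
  · -- global solutions
    intro z hz hode
    have hstep := fun s => step_newton hopen hu (hz s) (hode s)
    constructor
    · intro t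
      exact is_const_of_deriv_eq_zero (fun s => ((hstep s).1).differentiableAt)
        (fun s => ((hstep s).1).deriv) t 0
    · intro t
      have hdz : deriv z = fun s => -2 * Complex.I * wdzbar u (z s) :=
        funext fun s => (hode s).deriv
      rw [hdz]
      exact (hstep t).2
  · -- local existence
    intro z₀ hz₀
    have hca : ContDiffAt ℝ 2 u z₀ := hu.1.contDiffAt (hopen.mem_nhds hz₀)
    have hfd : ContDiffAt ℝ 1 (fderiv ℝ u) z₀ := hca.fderiv_right (by norm_num)
    have hPc : ContDiffAt ℝ 1 (fun x => ((fderiv ℝ u x 1 : ℝ) : ℂ)) z₀ :=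
      Complex.ofRealCLM.contDiff.contDiffAt.comp z₀ (hfd.clm_apply contDiffAt_const)
    have hQc : ContDiffAt ℝ 1 (fun x => ((fderiv ℝ u x Complex.I : ℝ) : ℂ)) z₀ :=
      Complex.ofRealCLM.contDiff.contDiffAt.comp z₀ (hfd.clm_apply contDiffAt_const)
    have hv : ContDiffAt ℝ 1 (fun x => -2 * Complex.I * wdzbar u x) z₀ :=
      contDiffAt_const.mul ((hPc.add (contDiffAt_const.mul hQc)).div_const 2)
    obtain ⟨f, hf0, ε, hε, hf⟩ := ContDiffAt.exists_forall_mem_closedBall_exists_eq_forall_mem_Ioo_hasDerivAt₀ hv (0 : ℝ)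
    have h0 : (0 : ℝ) ∈ Set.Ioo (0 - ε) (0 + ε) := by constructor <;> simp [hε] <;> linarith
    have hct : ContinuousAt f 0 := (hf 0 h0).continuousAt
    have hmem0 : Ω ∈ nhds (f 0) := hopen.mem_nhds (hf0 ▸ hz₀)
    obtain ⟨δ, hδ, hball⟩ := Metric.eventually_nhds_iff_ball.mp (hct.eventually_mem hmem0)
    refine ⟨min ε δ, lt_min hε hδ, f, hf0, fun t ht => ?_⟩
    have htε : t ∈ Set.Ioo (0 - ε) (0 + ε) := by
      constructor
      · have := ht.1; have := min_le_left ε δ; simp only [zero_sub]; linarith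
      · have := ht.2; have := min_le_left ε δ; simp only [zero_add]; linarith
    have htδ : f t ∈ Ω := by
      apply hball
      rw [Metric.mem_ball, Real.dist_eq, sub_zero, abs_lt]
      have h1 := ht.1; have h2 := ht.2; have := min_le_right ε δ
      constructor <;> linarith
    have hD := hf t htε
    have hstep := step_newton hopen hu htδ hD
    refine ⟨htδ, hD, ?_, ?_⟩
    · -- constancy on the interval
      have hmemI : ∀ s ∈ Set.Ioo (-(min ε δ)) (min ε δ), f s ∈ Ω := by
        intro s hs
        apply hball
        rw [Metric.mem_ball, Real.dist_eq, sub_zero, abs_lt]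
        have h1 := hs.1; have h2 := hs.2; have := min_le_right ε δ
        constructor <;> linarith
      have hDI : ∀ s ∈ Set.Ioo (-(min ε δ)) (min ε δ),
          HasDerivAt f (-2 * Complex.I * wdzbar u (f s)) s := by
        intro s hs
        apply hf
        have h1 := hs.1; have h2 := hs.2; have := min_le_left ε δ
        constructor
        · simp only [zero_sub]; linarith
        · simp only [zero_add]; linarith
      have hstepI := fun s hs => step_newton hopen hu (hmemI s hs) (hDI s hs)
      have h0I : (0 : ℝ) ∈ Set.Ioo (-(min ε δ)) (min ε δ) := by
        constructor <;> [skip; exact lt_min hε hδ] <;> simp [lt_min hε hδ]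
      have := (convex_Ioo (-(min ε δ)) (min ε δ)).is_const_of_fderivWithin_eq_zero
        (f := fun s => u (f s))
        (fun s hs => ((hstepI s hs).1).differentiableAt.differentiableWithinAt)
        (fun s hs => by
          rw [fderivWithin_of_isOpen isOpen_Ioo hs, ((hstepI s hs).1).hasFDerivAt.fderiv]
          ext y; simp) ht h0I
      simpa [hf0] using this
    · -- Newton equation
      apply (hstep.2).congr_of_eventuallyEq
      filter_upwards [isOpen_Ioo.mem_nhds htε] with s hs
      exact (hf s hs).deriv
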